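/- Let κ be a regular uncountable cardinal, ⟨C_α | α < κ⟩ a C-sequence, and α < β < κ with α > 0. Define last(α,β) := α if λ(α,β) < α, and last(α,β) := min(im(tr(α,β))) otherwise. Then: (1) λ(last(α,β), β) < α (with the convention λ(δ,δ):=0); (2) if last(α,β) ≠ α, then α ∈ acc(C_{last(α,β)}); (3) tr(last(α,β), β) is an initial segment of tr(α,β). -/

import Mathlib

open Cardinal Ordinal Set

noncomputable section

/-- The order type of a set of ordinals. -/
def otp (s : Set Ordinal) : Ordinal := Ordinal.type ((· < ·) : s → s → Prop)

/-- `a < b` for sets of ordinals: every element of `a` is below every element of `b`. -/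
def SetLT (a b : Set Ordinal.{0}) : Prop := ∀ α ∈ a, ∀ β ∈ b, α < β

/-- `A` is a pairwise disjoint subfamily of `[κ]^σ`:
a family of subsets of (ordinals below) `κ` of order type `σ`, pairwise disjoint. -/
def IsFamily (κ σ : Ordinal.{0}) (A : Set (Set Ordinal)) : Prop :=
  (∀ a ∈ A, a ⊆ Set.Iio κ ∧ otp a = Ordinal.lift.{1} σ) ∧ A.PairwiseDisjoint id

/-- Shelah's principle `Pr₁(κ, κ, θ, χ)`. -/
def Pr1 (κ θ χ : Cardinal.{0}) : Prop :=
  ∃ c : Ordinal → Ordinal → Ordinal,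
    (∀ α β : Ordinal, α < β → β < κ.ord → c α β < θ.ord) ∧
    ∀ σ : Ordinal, σ < χ.ord → ∀ A : Set (Set Ordinal),
      IsFamily κ.ord σ A → #A = Cardinal.lift.{1} κ →
      ∀ τ : Ordinal, τ < θ.ord →
        ∃ a ∈ A, ∃ b ∈ A, SetLT a b ∧ ∀ α ∈ a, ∀ β ∈ b, c α β = τ
/-- `D` is a club (closed unbounded set) in `κ`. -/
def ClubIn (D : Set Ordinal.{0}) (κ : Ordinal.{0}) : Prop :=
  D ⊆ Set.Iio κ ∧ (∀ α < κ, ∃ β ∈ D, α ≤ β) ∧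
    ∀ δ < κ, 0 < δ → (∀ γ < δ, ∃ x ∈ D, γ < x ∧ x < δ) → δ ∈ D

/-- `S` is a stationary subset of `κ`. -/
def StatIn (S : Set Ordinal.{0}) (κ : Ordinal.{0}) : Prop :=
  S ⊆ Set.Iio κ ∧ ∀ D : Set Ordinal, ClubIn D κ → (S ∩ D).Nonempty

/-- `δ` is an accumulation point belonging to `s`, i.e. `δ ∈ acc(s)`:
`δ ∈ s` and `sup(s ∩ δ) = δ > 0`. -/
def IsAccOf (s : Set Ordinal.{0}) (δ : Ordinal.{0}) : Prop :=
  δ ∈ s ∧ 0 < δ ∧ ∀ γ < δ, ∃ x ∈ s, γ < x ∧ x < δ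

/-- `C` is a C-sequence over `κ`: each `C α` is a closed subset of `α`
with `sup (C α) = sup α`. -/
def IsCSeq (κ : Ordinal.{0}) (C : Ordinal.{0} → Set Ordinal.{0}) : Prop :=
  (∀ α < κ, C α ⊆ Set.Iio α) ∧
  (∀ α < κ, ∀ δ, 0 < δ → δ < α → (∀ γ < δ, ∃ x ∈ C α, γ < x ∧ x < δ) → δ ∈ C α) ∧
  (∀ α < κ, ∀ γ : Ordinal, (∀ x ∈ C α, x ≤ γ) → ∀ δ < α, δ ≤ γ)

/-- The upper trace of the walk from `β` down to `α` along the C-sequence `C`. -/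
def Tr (C : Ordinal.{0} → Set Ordinal.{0}) (α β : Ordinal.{0}) : ℕ → Ordinal.{0}
  | 0 => β
  | n + 1 => if α < Tr C α β n then sInf (C (Tr C α β n) ∩ Set.Ici α) else α

/-- The length `ρ₂(α,β)` of the walk from `β` down to `α`. -/
def rho2 (C : Ordinal.{0} → Set Ordinal.{0}) (α β : Ordinal.{0}) : ℕ :=
  sInf {n | Tr C α β n = α}

/-- The (finite) trace `tr(α,β)` of the walk, as a list. -/
def trL (C : Ordinal.{0} → Set Ordinal.{0}) (α β : Ordinal.{0}) : List Ordinal.{0} :=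
  (List.range (rho2 C α β)).map (Tr C α β)

/-- `λ(α,β) = max_{i<ρ₂(α,β)} sup (C_{Tr(α,β)(i)} ∩ α)`. -/
def lamb (C : Ordinal.{0} → Set Ordinal.{0}) (α β : Ordinal.{0}) : Ordinal.{0} :=
  (Finset.range (rho2 C α β)).sup fun i => sSup (C (Tr C α β i) ∩ Set.Iio α)

/-- `η_{α,β} := min { n < ω ∣ η ∈ C_{Tr(α,β)(n)} or n = ρ₂(α,β) } + 1`. -/
def etaIdx (C : Ordinal.{0} → Set Ordinal.{0}) (η α β : Ordinal.{0}) : ℕ :=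
  sInf {n | η ∈ C (Tr C α β n) ∨ n = rho2 C α β} + 1

/-- The transformation principle `Pℓ₁(κ, θ, χ)`. -/
def Pl1 (κ θ χ : Cardinal.{0}) : Prop :=
  ∃ t : Ordinal.{0} → Ordinal.{0} → Ordinal.{0} × Ordinal.{0} × Ordinal.{0},
    (∀ α β : Ordinal, α < β → β < κ.ord →
      (t α β).1 ≤ (t α β).2.1 ∧ (t α β).2.1 ≤ α ∧ α < (t α β).2.2 ∧ (t α β).2.2 ≤ β) ∧
    ∀ σ : Ordinal, σ < χ.ord → ∀ A : Set (Set Ordinal),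
      IsFamily κ.ord σ A → #A = Cardinal.lift.{1} κ →
      ∃ S : Set Ordinal, StatIn S κ.ord ∧
        ∀ αs ∈ S, ∀ βs ∈ S, αs < βs →
          ∀ τ : Ordinal, τ < θ.ord → τ < αs →
            ∃ a ∈ A, ∃ b ∈ A, SetLT a b ∧
              ∀ α ∈ a, ∀ β ∈ b, t α β = (τ, αs, βs)

/-- The transformation principle `Pℓ₂(κ, Γ, χ)`. -/
def Pl2 (κ : Cardinal.{0}) (Γ : Set Ordinal.{0}) (χ : Cardinal.{0}) : Prop :=
  ∃ t : Ordinal.{0} → Ordinal.{0} → Ordinal.{0} × Ordinal.{0},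
    (∀ α β : Ordinal, α < β → β < κ.ord →
      (t α β).1 ≤ α ∧ α < (t α β).2 ∧ (t α β).2 ≤ β) ∧
    ∀ σ : Ordinal, σ < χ.ord → ∀ A : Set (Set Ordinal),
      IsFamily κ.ord σ A → #A = Cardinal.lift.{1} κ →
      ∃ D : Set Ordinal, ClubIn D κ.ord ∧
        ∀ αs ∈ Γ ∩ D, ∀ βs ∈ Γ ∩ D, αs < βs →
          ∃ a ∈ A, ∃ b ∈ A, SetLT a b ∧
            ∀ α ∈ a, ∀ β ∈ b, t α β = (αs, βs)

/-- The principle `Pr₁⁺(κ, θ, χ)`. -/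
def Pr1plus (κ θ χ : Cardinal.{0}) : Prop :=
  ∃ o : Ordinal.{0} → Ordinal.{0} → Ordinal.{0},
    (∀ α β : Ordinal, 0 < α → α < β → β < κ.ord → o α β < α ∧ o α β < θ.ord) ∧
    ∀ ζ : Ordinal, ζ < θ.ord → ∀ σ : Ordinal, σ < χ.ord →
      ∀ A : Set (Set Ordinal), IsFamily κ.ord σ A → #A = Cardinal.lift.{1} κ →
        ∃ γ < κ.ord, ∀ b : Set Ordinal,
          b ⊆ Set.Iio κ.ord → b ⊆ Set.Ici γ → otp b = Ordinal.lift.{1} σ →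
          ∃ a ∈ A, a ⊆ Set.Iio γ ∧ ∀ α ∈ a, ∀ β ∈ b, o α β = ζ

/-- The oscillation principle `Pℓ₆(κ, χ)`. -/
def Pl6 (κ χ : Cardinal.{0}) : Prop :=
  ∃ d : List Ordinal.{0} → ℕ,
    ∀ (u v : Ordinal.{0} → Set (List Ordinal.{0}))
      (s : Ordinal.{0} → List Ordinal.{0}) (φ : Ordinal.{0} → Ordinal.{0}),
      (∃ ε < κ.ord, ∀ α : Ordinal, ε ≤ α → α < κ.ord → φ α < α) →
      (∀ α < κ.ord, (u α).Nonempty ∧ #(u α) < Cardinal.lift.{1} χ ∧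
        ∀ ϱ ∈ u α, (∀ x ∈ ϱ, x < κ.ord) ∧ α ∈ ϱ) →
      (∀ α < κ.ord, (v α).Nonempty ∧ #(v α) < Cardinal.lift.{1} χ ∧
        ∀ σl ∈ v α, (∀ x ∈ σl, x < κ.ord) ∧ (s α ++ [α]) <+: σl) →
      ∃ α β : Ordinal, α < β ∧ β < κ.ord ∧ φ α = φ β ∧
        ∀ ϱ ∈ u α, ∀ σl ∈ v β, d (ϱ ++ σl) = ϱ.length

/-- Shelah's principle `Pr₆(κ, κ, θ, χ)`. -/
def Pr6 (κ θ χ : Cardinal.{0}) : Prop :=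
  ∃ d : List Ordinal.{0} → Ordinal.{0},
    (∀ l, d l < θ.ord) ∧
    ∀ τ : Ordinal, τ < θ.ord → ∀ E : Set Ordinal, ClubIn E κ.ord →
      ∀ u v : Ordinal.{0} → Set (List Ordinal.{0}),
        (∀ α ∈ E, (u α).Nonempty ∧ #(u α) < Cardinal.lift.{1} χ ∧
          ∀ ϱ ∈ u α, (∀ x ∈ ϱ, x < κ.ord) ∧ α ∈ ϱ) →
        (∀ α ∈ E, (v α).Nonempty ∧ #(v α) < Cardinal.lift.{1} χ ∧
          ∀ σl ∈ v α, (∀ x ∈ σl, x < κ.ord) ∧ α ∈ σl) →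
        ∃ α ∈ E, ∃ β ∈ E, α < β ∧
          ∀ ϱ ∈ u α, ∀ σl ∈ v β, d (ϱ ++ σl) = τ

/-- The square principle `□(κ)`. -/
def SquarePrin (κ : Ordinal.{0}) : Prop :=
  ∃ C : Ordinal.{0} → Set Ordinal.{0},
    (∀ α < κ, C α ⊆ Set.Iio α) ∧
    (∀ α < κ, Order.IsSuccLimit α →
      (∀ γ < α, ∃ x ∈ C α, γ < x) ∧
      (∀ δ < α, 0 < δ → (∀ γ < δ, ∃ x ∈ C α, γ < x ∧ x < δ) → δ ∈ C α)) ∧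
    (∀ α < κ, ∀ δ, IsAccOf (C α) δ → C α ∩ Set.Iio δ = C δ) ∧
    ¬ ∃ D : Set Ordinal, ClubIn D κ ∧ ∀ δ, IsAccOf D δ → D ∩ Set.Iio δ = C δ

/-- The stick principle `⫯(κ)` (with witnesses of size `μ`). -/
def Stick (κ μ : Cardinal.{0}) : Prop :=
  ∃ X : Ordinal.{0} → Set Ordinal.{0},
    (∀ γ < κ.ord, X γ ⊆ Set.Iio κ.ord) ∧
    ∀ Y : Set Ordinal, Y ⊆ Set.Iio κ.ord → #Y = Cardinal.lift.{1} κ →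
      ∃ γ < κ.ord, X γ ⊆ Y ∧ #(X γ) = Cardinal.lift.{1} μ

/-- A filter is `λ`-complete: it is closed under intersections of fewer than `λ` sets. -/
def FilterComplete (lam : Cardinal.{0}) {α : Type 1} (F : Filter α) : Prop :=
  ∀ ι : Type 1, #ι < Cardinal.lift.{1} lam →
    ∀ f : ι → Set α, (∀ i, f i ∈ F) → (⋂ i, f i) ∈ F

/-- `lam` is a strongly compact cardinal: every `lam`-complete (proper) filter
extends to a `lam`-complete ultrafilter. -/
def IsStronglyCompact (lam : Cardinal.{0}) : Prop :=
  ∀ (α : Type 1) (F : Filter α), F.NeBot → FilterComplete lam F →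
    ∃ U : Ultrafilter α, (↑U : Filter α) ≤ F ∧ FilterComplete lam (↑U : Filter α)

/-- `last(α,β)`: `α` if `λ(α,β) < α`, and otherwise `min(im(tr(α,β)))`. -/
def lastStep (C : Ordinal.{0} → Set Ordinal.{0}) (α β : Ordinal.{0}) : Ordinal.{0} :=
  if lamb C α β < α then α else sInf {x | ∃ i < rho2 C α β, Tr C α β i = x}

private lemma step_nonempty {κ : Ordinal.{0}} {C : Ordinal.{0} → Set Ordinal.{0}}
    (hC : IsCSeq κ C) {α γ : Ordinal} (h0 : 0 < α) (hag : α < γ) (hγ : γ < κ) :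
    (C γ ∩ Set.Ici α).Nonempty := by
  by_contra hemp
  rw [Set.not_nonempty_iff_eq_empty] at hemp
  have hlt : ∀ x ∈ C γ, x < α := by
    intro x hx
    by_contra h
    have : x ∈ C γ ∩ Set.Ici α := ⟨hx, le_of_not_gt h⟩
    simp [hemp] at this
  have hacc : ∀ γ' < α, ∃ x ∈ C γ, γ' < x ∧ x < α := by
    intro γ' hγ'
    by_contra h
    push_neg at h
    have hb : ∀ x ∈ C γ, x ≤ γ' := by
      intro x hx
      by_contra hbx
      exact absurd (h x hx (lt_of_not_ge hbx)) (not_le.mpr (hlt x hx))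
    exact absurd (hC.2.2 γ hγ γ' hb α hag) (not_le.mpr hγ')
  have hmem : α ∈ C γ := hC.2.1 γ hγ α h0 hag hacc
  have : α ∈ C γ ∩ Set.Ici α := ⟨hmem, le_refl α⟩
  simp [hemp] at this

/-- Properties of `last(α,β)`: (1) `λ(last(α,β),β) < α`;
(2) if `last(α,β) ≠ α` then `α ∈ acc(C_{last(α,β)})`;
(3) `tr(last(α,β),β)` is an initial segment of `tr(α,β)`. -/
theorem lastStep_props (κ : Cardinal.{0}) (hreg : κ.IsRegular) (hκ : ℵ₀ < κ)
    (C : Ordinal.{0} → Set Ordinal.{0}) (hC : IsCSeq κ.ord C)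
    (α β : Ordinal) (h0 : 0 < α) (h1 : α < β) (h2 : β < κ.ord) :
    lamb C (lastStep C α β) β < α ∧
    (lastStep C α β ≠ α → IsAccOf (C (lastStep C α β)) α) ∧
    trL C (lastStep C α β) β <+: trL C α β := by
  obtain ⟨hCsub, hCclosed, hCunbdd⟩ := hC
  -- basic bounds on the walk
  have hbase : ∀ m, Tr C α β m < κ.ord ∧ α ≤ Tr C α β m := by
    intro m
    induction m with
    | zero => exact ⟨h2, h1.le⟩
    | succ m ih =>
      by_cases h : α < Tr C α β m
      · have hne := step_nonempty ⟨hCsub, hCclosed, hCunbdd⟩ h0 h ih.1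
        have hmem := csInf_mem hne
        have heq : Tr C α β (m+1) = sInf (C (Tr C α β m) ∩ Set.Ici α) := by
          rw [Tr, if_pos h]
        rw [heq]
        exact ⟨lt_trans (hCsub (Tr C α β m) ih.1 hmem.1) ih.1, hmem.2⟩
      · have heq : Tr C α β (m+1) = α := by rw [Tr, if_neg h]
        rw [heq]
        exact ⟨lt_trans h1 h2, le_refl α⟩
  have hstep : ∀ m, α < Tr C α β m →
      Tr C α β (m+1) = sInf (C (Tr C α β m) ∩ Set.Ici α) := by
    intro m h; rw [Tr, if_pos h]
  have hmemC : ∀ m, α < Tr C α β m → Tr C α β (m+1) ∈ C (Tr C α β m) := by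
    intro m h
    rw [hstep m h]
    exact (csInf_mem (step_nonempty ⟨hCsub, hCclosed, hCunbdd⟩ h0 h (hbase m).1)).1
  have hdec : ∀ m, α < Tr C α β m → Tr C α β (m+1) < Tr C α β m := by
    intro m h
    exact hCsub (Tr C α β m) (hbase m).1 (hmemC m h)
  -- the walk terminates
  have hterm : {m | Tr C α β m = α}.Nonempty := by
    by_contra h
    rw [Set.not_nonempty_iff_eq_empty] at h
    have hgt : ∀ m, α < Tr C α β m := by
      intro m
      rcases lt_or_eq_of_le (hbase m).2 with h' | h'
      · exact h'
      · exact absurd h'.symm (by intro he; have : m ∈ {m | Tr C α β m = α} := he; simp [h] at this)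
    obtain ⟨m0, hm0⟩ := csInf_mem (Set.range_nonempty (Tr C α β))
    have h1' : Tr C α β (m0 + 1) < Tr C α β m0 := hdec m0 (hgt m0)
    rw [hm0] at h1'
    exact absurd (csInf_le' (Set.mem_range_self (m0 + 1))) (not_le.mpr h1')
  set n := rho2 C α β with hn
  have hrn : Tr C α β n = α := Nat.sInf_mem hterm
  have hlti : ∀ i < n, α < Tr C α β i := by
    intro i hi
    rcases lt_or_eq_of_le (hbase i).2 with h' | h'
    · exact h'
    · exact absurd h'.symm (Nat.notMem_of_lt_sInf hi)
  have hpos : 0 < n := by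
    refine Nat.pos_of_ne_zero ?_
    intro h
    rw [h] at hrn
    exact absurd hrn.symm (ne_of_lt h1)
  have hanti : ∀ j, j ≤ n → ∀ i, i ≤ j → Tr C α β j ≤ Tr C α β i := by
    intro j
    induction j with
    | zero => intro _ i hi; rw [Nat.le_zero.mp hi]
    | succ j ih =>
      intro hj i hi
      rcases Nat.lt_or_ge i (j+1) with h | h
      · have hd : Tr C α β (j+1) < Tr C α β j :=
          hdec j (hlti j (lt_of_lt_of_le (Nat.lt_succ_self j) hj))
        exact le_trans hd.le (ih (le_trans (Nat.le_succ j) hj) i (Nat.lt_succ_iff.mp h))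
      · rw [le_antisymm hi h]
  have hstrict : ∀ i j, i < j → j ≤ n → Tr C α β j < Tr C α β i := by
    intro i j hij hj
    have hd : Tr C α β (i+1) < Tr C α β i := hdec i (hlti i (lt_of_lt_of_le hij hj))
    exact lt_of_le_of_lt (hanti j hj (i+1) hij) hd
  -- sup bounds
  have hsuple : ∀ γ : Ordinal, sSup (C γ ∩ Set.Iio α) ≤ α := by
    intro γ
    rcases Set.eq_empty_or_nonempty (C γ ∩ Set.Iio α) with he | hne
    · rw [he, csSup_empty]; exact le_of_lt h0
    · exact csSup_le hne (fun x hx => hx.2.le)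
  have hkey : ∀ i, α < Tr C α β i → sSup (C (Tr C α β i) ∩ Set.Iio α) = α →
      (∀ γ < α, ∃ x ∈ C (Tr C α β i), γ < x ∧ x < α) ∧
      α ∈ C (Tr C α β i) ∧ Tr C α β (i+1) = α := by
    intro i hi hsup
    have hne : (C (Tr C α β i) ∩ Set.Iio α).Nonempty := by
      by_contra h
      rw [Set.not_nonempty_iff_eq_empty] at h
      rw [h, csSup_empty] at hsup
      exact absurd hsup.symm (ne_of_gt h0)
    have hacc : ∀ γ < α, ∃ x ∈ C (Tr C α β i), γ < x ∧ x < α := by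
      intro γ hγ
      obtain ⟨x, hx, hgx⟩ := exists_lt_of_lt_csSup hne (by rw [hsup]; exact hγ)
      exact ⟨x, hx.1, hgx, hx.2⟩
    have hmem : α ∈ C (Tr C α β i) := hCclosed (Tr C α β i) (hbase i).1 α h0 hi hacc
    refine ⟨hacc, hmem, ?_⟩
    rw [hstep i hi]
    exact le_antisymm (csInf_le' ⟨hmem, le_refl α⟩)
      (le_csInf ⟨α, hmem, le_refl α⟩ (fun x hx => hx.2))
  by_cases hcase : lamb C α β < α
  · rw [lastStep, if_pos hcase]
    exact ⟨hcase, fun h => absurd rfl h, List.prefix_refl _⟩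
  · have hlamb : lamb C α β = α :=
      le_antisymm (Finset.sup_le (fun i _ => hsuple _)) (not_lt.mp hcase)
    obtain ⟨i, hi_mem, hi_eq⟩ := Finset.exists_mem_eq_sup (Finset.range n)
      (Finset.nonempty_range_iff.mpr hpos.ne')
      (fun i => sSup (C (Tr C α β i) ∩ Set.Iio α))
    have hi : i < n := Finset.mem_range.mp hi_mem
    have hsup_i : sSup (C (Tr C α β i) ∩ Set.Iio α) = α := by
      have : lamb C α β = sSup (C (Tr C α β i) ∩ Set.Iio α) := hi_eq
      rw [← this, hlamb]
    obtain ⟨hacc_i, hmem_i, hTr_i1⟩ := hkey i (hlti i hi) hsup_i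
    have heq : i + 1 = n := le_antisymm (Nat.succ_le_of_lt hi) (Nat.sInf_le hTr_i1)
    -- identify lastStep
    have hlast : lastStep C α β = Tr C α β i := by
      rw [lastStep, if_neg hcase]
      refine le_antisymm (csInf_le' ⟨i, hi, rfl⟩)
        (le_csInf ⟨Tr C α β i, i, hi, rfl⟩ ?_)
      rintro x ⟨j, hj, rfl⟩
      have hji : j ≤ i := by omega
      exact hanti i (le_of_lt hi) j hji
    have hαi : α < Tr C α β i := hlti i hi
    -- walk agreement
    have hW : ∀ j, j ≤ i → Tr C (Tr C α β i) β j = Tr C α β j := by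
      intro j
      induction j with
      | zero => intro _; rfl
      | succ j ih =>
        intro hj
        have hji : j < i := hj
        have hαj : α < Tr C α β j := hlti j (lt_trans hji hi)
        have hlast_lt : Tr C α β i < Tr C α β j := hstrict j i hji (le_of_lt hi)
        have hif : Tr C (Tr C α β i) β (j+1)
            = sInf (C (Tr C (Tr C α β i) β j) ∩ Set.Ici (Tr C α β i)) := by
          rw [Tr, if_pos]
          rw [ih (le_trans (Nat.le_succ j) hj)]
          exact hlast_lt
        rw [hif, ih (le_trans (Nat.le_succ j) hj)]
        have hmem1 : Tr C α β (j+1) ∈ C (Tr C α β j) := hmemC j hαj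
        have hge : Tr C α β i ≤ Tr C α β (j+1) := hanti i (le_of_lt hi) (j+1) hj
        refine le_antisymm (csInf_le' ⟨hmem1, hge⟩)
          (le_csInf ⟨_, hmem1, hge⟩ ?_)
        rintro x ⟨hxC, hxge⟩
        have hax : α ≤ x := le_trans (le_of_lt hαi) hxge
        rw [hstep j hαj]
        exact csInf_le' ⟨hxC, hax⟩
    have hrho_last : rho2 C (Tr C α β i) β = i := by
      have hmem : i ∈ {m | Tr C (Tr C α β i) β m = Tr C α β i} := hW i le_rfl
      refine le_antisymm (Nat.sInf_le hmem) (le_csInf ⟨i, hmem⟩ ?_)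
      intro m hm
      by_contra h
      push_neg at h
      have : Tr C α β m = Tr C α β i := by rw [← hW m (le_of_lt h)]; exact hm
      exact absurd this (ne_of_gt (hstrict m i h (le_of_lt hi)))
    rw [hlast]
    refine ⟨?_, fun _ => ⟨hmem_i, h0, hacc_i⟩, ?_⟩
    · -- lamb C (Tr C α β i) β < α
      have hlamb_last : lamb C (Tr C α β i) β =
          (Finset.range i).sup (fun j => sSup (C (Tr C α β j) ∩ Set.Iio α)) := by
        rw [lamb, hrho_last]
        refine Finset.sup_congr rfl ?_
        intro j hj
        have hji : j < i := Finset.mem_range.mp hj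
        rw [hW j (le_of_lt hji)]
        congr 1
        ext x
        simp only [Set.mem_inter_iff, Set.mem_Iio]
        constructor
        · rintro ⟨hxC, hxlt⟩
          refine ⟨hxC, ?_⟩
          by_contra hge
          push_neg at hge
          have hx1 : Tr C α β (j+1) ≤ x := by
            rw [hstep j (hlti j (lt_trans hji hi))]
            exact csInf_le' ⟨hxC, hge⟩
          have hx2 : Tr C α β i ≤ x :=
            le_trans (hanti i (le_of_lt hi) (j+1) hji) hx1
          exact absurd hxlt (not_lt.mpr hx2)
        · rintro ⟨hxC, hxlt⟩
          exact ⟨hxC, lt_trans hxlt hαi⟩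
      rw [hlamb_last]
      refine (Finset.sup_lt_iff (by simpa using h0)).mpr ?_
      intro j hj
      have hji : j < i := Finset.mem_range.mp hj
      rcases lt_or_eq_of_le (hsuple (Tr C α β j)) with h | h
      · exact h
      · exfalso
        obtain ⟨_, _, hTr⟩ := hkey j (hlti j (lt_trans hji hi)) h
        have : n ≤ j + 1 := Nat.sInf_le hTr
        omega
    · -- prefix
      have htrL : trL C (Tr C α β i) β = (List.range i).map (Tr C α β) := by
        rw [trL, hrho_last]
        exact List.map_congr_left (fun m hm => hW m (le_of_lt (List.mem_range.mp hm)))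
      rw [htrL, trL]
      refine ⟨((List.range (n - i)).map (i + ·)).map (Tr C α β), ?_⟩
      rw [← List.map_append, ← List.range_add (n := i) (m := n - i), Nat.add_sub_cancel' (le_of_lt hi)]


end
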